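/- For β ∈ ℂ with |Re β| < 1/2, the function 1 - k̂(ξ) = 1 + sin²(πβ)/(cosh²(πξ) - sin²(πβ)) = cosh²(πξ)/(cosh²(πξ) - sin²(πβ)) is nonvanishing for all real ξ and the curve {1 - k̂(ξ) : ξ ∈ ℝ} (closed up at its common limit 1 as ξ → ±∞) has winding number zero about the origin. -/

import Mathlib

open Complex Filter

/-- Key arithmetic fact: for `|Re β| < 1/2`, `sin²(πβ)` is never a real number `≥ 1`. -/
lemma stmt5_keyA (β : ℂ) (hβ : |β.re| < 1/2) :
    ∀ t : ℝ, 1 ≤ t → Complex.sin ((Real.pi : ℂ) * β) ^ 2 ≠ (t : ℂ) := by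
  intro t ht h
  set z : ℂ := (Real.pi : ℂ) * β with hz
  have hzre : z.re = Real.pi * β.re := by simp [hz, Complex.mul_re]
  have hsin := Complex.sin_eq z
  have hre : (Complex.sin z).re = Real.sin z.re * Real.cosh z.im := by
    rw [hsin]
    simp [Complex.sin_ofReal_re, Complex.sin_ofReal_im, Complex.cos_ofReal_re,
      Complex.cos_ofReal_im, Complex.sinh_ofReal_re, Complex.sinh_ofReal_im,
      Complex.cosh_ofReal_re, Complex.cosh_ofReal_im, Complex.mul_re, Complex.mul_im]
  have him : (Complex.sin z).im = Real.cos z.re * Real.sinh z.im := by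
    rw [hsin]
    simp [Complex.sin_ofReal_re, Complex.sin_ofReal_im, Complex.cos_ofReal_re,
      Complex.cos_ofReal_im, Complex.sinh_ofReal_re, Complex.sinh_ofReal_im,
      Complex.cosh_ofReal_re, Complex.cosh_ofReal_im, Complex.mul_re, Complex.mul_im]
  set a : ℝ := (Complex.sin z).re
  set b : ℝ := (Complex.sin z).im
  have h1 : a ^ 2 - b ^ 2 = t := by
    have := congrArg Complex.re h
    simpa [pow_two, Complex.mul_re] using this
  have h2 : a * b + b * a = 0 := by
    have := congrArg Complex.im h
    simpa [pow_two, Complex.mul_im] using this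
  have hab : a * b = 0 := by linarith
  -- cos (π β.re) > 0
  have hcos : 0 < Real.cos z.re := by
    rw [hzre]
    apply Real.cos_pos_of_mem_Ioo
    constructor
    · have := abs_lt.mp hβ
      nlinarith [Real.pi_pos]
    · have := abs_lt.mp hβ
      nlinarith [Real.pi_pos]
  rcases mul_eq_zero.mp hab with ha | hb
  · -- a = 0, then -b² = t ≥ 1, impossible
    rw [ha] at h1
    nlinarith
  · -- b = 0 : cos(πx) sinh(πy) = 0, cos > 0 so sinh(πy)=0, y = 0
    have hsinh : Real.sinh z.im = 0 := by
      rcases mul_eq_zero.mp (him ▸ hb) with h' | h'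
      · exact absurd h' (ne_of_gt hcos)
      · exact h'
    have hy : z.im = 0 := Real.sinh_eq_zero.mp hsinh
    have hcosh : Real.cosh z.im = 1 := by rw [hy, Real.cosh_zero]
    have ha2 : a = Real.sin z.re := by rw [hre, hcosh, mul_one]
    -- sin² < 1 since cos > 0
    have hs2 : a ^ 2 < 1 := by
      have h3 := Real.sin_sq_add_cos_sq z.re
      rw [ha2]
      nlinarith [pow_pos hcos 2]
    rw [hb] at h1
    nlinarith

lemma stmt5_coshTop : Tendsto Real.cosh atTop atTop := by
  have hle : ∀ x : ℝ, Real.exp x / 2 ≤ Real.cosh x := by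
    intro x
    rw [Real.cosh_eq]
    have := Real.exp_pos (-x)
    linarith
  exact tendsto_atTop_mono hle (Real.tendsto_exp_atTop.atTop_div_const (by norm_num))

lemma stmt5_coshBot : Tendsto Real.cosh atBot atTop := by
  have : Real.cosh = fun x : ℝ => Real.cosh (-x) := by
    funext x; rw [Real.cosh_neg]
  rw [this]
  exact stmt5_coshTop.comp tendsto_neg_atBot_atTop

/-- For `|Re β| < 1/2`, the function `1 - k̂(ξ) = cosh²(πξ)/(cosh²(πξ) - sin²(πβ))` is
nonvanishing for real `ξ`, and the curve `{1 - k̂(ξ) : ξ ∈ ℝ}`, closed up at its common limit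
`1` as `ξ → ±∞`, has winding number zero about the origin (expressed via the existence of a
continuous logarithm along the curve with equal limits `0 = log 1` at `±∞`). -/
theorem stmt5 (β : ℂ) (hβ : |β.re| < 1/2) :
    let khat : ℝ → ℂ := fun ξ => -Complex.sin ((Real.pi : ℂ) * β) ^ 2 /
      (Complex.cosh ((Real.pi : ℂ) * (ξ : ℂ)) ^ 2 - Complex.sin ((Real.pi : ℂ) * β) ^ 2)
    let f : ℝ → ℂ := fun ξ => Complex.cosh ((Real.pi : ℂ) * (ξ : ℂ)) ^ 2 /
      (Complex.cosh ((Real.pi : ℂ) * (ξ : ℂ)) ^ 2 - Complex.sin ((Real.pi : ℂ) * β) ^ 2)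
    (∀ ξ : ℝ, 1 - khat ξ = f ξ) ∧
    (∀ ξ : ℝ, f ξ ≠ 0) ∧
    (∃ φ : ℝ → ℂ, Continuous φ ∧ (∀ ξ : ℝ, Complex.exp (φ ξ) = f ξ) ∧
      Tendsto φ atTop (nhds 0) ∧ Tendsto φ atBot (nhds 0)) := by
  intro khat f
  have keyA := stmt5_keyA β hβ
  -- cosh of a real is real
  have hcoshR : ∀ ξ : ℝ, Complex.cosh ((Real.pi : ℂ) * (ξ : ℂ)) =
      ((Real.cosh (Real.pi * ξ) : ℝ) : ℂ) := by
    intro ξ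
    rw [Complex.ofReal_cosh]
    norm_cast
  have hc1 : ∀ ξ : ℝ, 1 ≤ Real.cosh (Real.pi * ξ) ^ 2 := by
    intro ξ
    have := Real.one_le_cosh (Real.pi * ξ)
    nlinarith
  -- denominator nonzero
  have hden : ∀ ξ : ℝ, Complex.cosh ((Real.pi : ℂ) * (ξ : ℂ)) ^ 2 -
      Complex.sin ((Real.pi : ℂ) * β) ^ 2 ≠ 0 := by
    intro ξ h
    apply keyA (Real.cosh (Real.pi * ξ) ^ 2) (hc1 ξ)
    have h2 : Complex.cosh ((Real.pi : ℂ) * (ξ : ℂ)) ^ 2 =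
        ((Real.cosh (Real.pi * ξ) ^ 2 : ℝ) : ℂ) := by
      rw [hcoshR ξ]; push_cast; ring
    rw [← h2]
    linear_combination -h
  have hnum : ∀ ξ : ℝ, Complex.cosh ((Real.pi : ℂ) * (ξ : ℂ)) ^ 2 ≠ 0 := by
    intro ξ
    rw [hcoshR ξ]
    norm_cast
    positivity
  have hf0 : ∀ ξ : ℝ, f ξ ≠ 0 := fun ξ => div_ne_zero (hnum ξ) (hden ξ)
  -- f lands in the slit plane
  have hslit : ∀ ξ : ℝ, f ξ ∈ Complex.slitPlane := by
    intro ξ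
    by_contra hmem
    rw [Complex.mem_slitPlane_iff] at hmem
    push_neg at hmem
    obtain ⟨hre, him⟩ := hmem
    set r : ℝ := (f ξ).re with hrdef
    have hfr : f ξ = ((r : ℝ) : ℂ) := by
      apply Complex.ext
      · simp; rfl
      · simp [him]
    have hrne : r ≠ 0 := by
      intro h0
      apply hf0 ξ
      rw [hfr, h0]
      norm_num
    have hrneg : r < 0 := lt_of_le_of_ne hre hrne
    have hcc : Complex.cosh ((Real.pi : ℂ) * (ξ : ℂ)) ^ 2 =
        ((Real.cosh (Real.pi * ξ) ^ 2 : ℝ) : ℂ) := by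
      rw [hcoshR ξ]; push_cast; ring
    have hD' : ((Real.cosh (Real.pi * ξ) ^ 2 : ℝ) : ℂ) -
        Complex.sin ((Real.pi : ℂ) * β) ^ 2 ≠ 0 := by
      rw [← hcc]; exact hden ξ
    have hND : ((Real.cosh (Real.pi * ξ) ^ 2 : ℝ) : ℂ) = ((r : ℝ) : ℂ) *
        (((Real.cosh (Real.pi * ξ) ^ 2 : ℝ) : ℂ) - Complex.sin ((Real.pi : ℂ) * β) ^ 2) := by
      have h1 : f ξ = ((Real.cosh (Real.pi * ξ) ^ 2 : ℝ) : ℂ) /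
          (((Real.cosh (Real.pi * ξ) ^ 2 : ℝ) : ℂ) - Complex.sin ((Real.pi : ℂ) * β) ^ 2) := by
        simp only [f]; rw [hcc]
      rw [h1, div_eq_iff hD'] at hfr
      linear_combination hfr
    set c2 : ℝ := Real.cosh (Real.pi * ξ) ^ 2
    have hrC : ((r : ℝ) : ℂ) ≠ 0 := by exact_mod_cast hrne
    have heq : Complex.sin ((Real.pi : ℂ) * β) ^ 2 = ((c2 - c2 / r : ℝ) : ℂ) := by
      have hcast : ((c2 - c2 / r : ℝ) : ℂ) = (c2 : ℂ) - (c2 : ℂ) / (r : ℂ) := by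
        push_cast
        ring
      rw [hcast, eq_sub_iff_add_eq, add_comm, ← eq_sub_iff_add_eq, div_eq_iff hrC]
      linear_combination hND
    apply keyA (c2 - c2 / r) _ heq
    have h1 : 1 ≤ c2 := hc1 ξ
    have : c2 / r < 0 := div_neg_of_pos_of_neg (by linarith) hrneg
    linarith
  -- continuity of f
  have hcont : Continuous f := by
    apply Continuous.div
    · exact (Complex.continuous_cosh.comp (continuous_const.mul Complex.continuous_ofReal)).pow 2
    · exact ((Complex.continuous_cosh.comp
        (continuous_const.mul Complex.continuous_ofReal)).pow 2).sub continuous_const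
    · exact hden
  -- rewriting f in a form suitable for limits
  have hrw : ∀ ξ : ℝ, f ξ = 1 / (1 - Complex.sin ((Real.pi : ℂ) * β) ^ 2 *
      (((Real.cosh (Real.pi * ξ) ^ 2)⁻¹ : ℝ) : ℂ)) := by
    intro ξ
    have hC2 : ((Real.cosh (Real.pi * ξ) : ℝ) : ℂ) ^ 2 ≠ 0 := by
      norm_cast
      positivity
    have hcc : Complex.cosh ((Real.pi : ℂ) * (ξ : ℂ)) ^ 2 =
        ((Real.cosh (Real.pi * ξ) : ℝ) : ℂ) ^ 2 := by
      rw [hcoshR ξ]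
    have hD' : ((Real.cosh (Real.pi * ξ) : ℝ) : ℂ) ^ 2 -
        Complex.sin ((Real.pi : ℂ) * β) ^ 2 ≠ 0 := by
      rw [← hcc]; exact hden ξ
    have e1 : (((Real.cosh (Real.pi * ξ) ^ 2)⁻¹ : ℝ) : ℂ) =
        (((Real.cosh (Real.pi * ξ) : ℝ) : ℂ) ^ 2)⁻¹ := by
      push_cast; ring
    have hq : (1 : ℂ) - Complex.sin ((Real.pi : ℂ) * β) ^ 2 *
        (((Real.cosh (Real.pi * ξ) : ℝ) : ℂ) ^ 2)⁻¹ =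
        (((Real.cosh (Real.pi * ξ) : ℝ) : ℂ) ^ 2 -
          Complex.sin ((Real.pi : ℂ) * β) ^ 2) / ((Real.cosh (Real.pi * ξ) : ℝ) : ℂ) ^ 2 := by
      rw [← div_eq_mul_inv, one_sub_div hC2]
    simp only [f]
    rw [hcc, e1, hq, one_div_div]
  have hinvlim_top : Tendsto (fun ξ : ℝ => ((Real.cosh (Real.pi * ξ) ^ 2)⁻¹ : ℝ))
      atTop (nhds 0) := by
    apply Filter.Tendsto.inv_tendsto_atTop
    exact (tendsto_pow_atTop (two_ne_zero)).comp
      (stmt5_coshTop.comp ((tendsto_const_mul_atTop_of_pos Real.pi_pos).mpr tendsto_id))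
  have hinvlim_bot : Tendsto (fun ξ : ℝ => ((Real.cosh (Real.pi * ξ) ^ 2)⁻¹ : ℝ))
      atBot (nhds 0) := by
    apply Filter.Tendsto.inv_tendsto_atTop
    exact (tendsto_pow_atTop (two_ne_zero)).comp
      (stmt5_coshBot.comp ((tendsto_const_mul_atBot_of_pos Real.pi_pos).mpr tendsto_id))
  have hflim : ∀ l : Filter ℝ,
      Tendsto (fun ξ : ℝ => ((Real.cosh (Real.pi * ξ) ^ 2)⁻¹ : ℝ)) l (nhds 0) →
      Tendsto f l (nhds 1) := by
    intro l hl
    have h0 : Tendsto (fun ξ : ℝ => (1 : ℂ) - Complex.sin ((Real.pi : ℂ) * β) ^ 2 *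
        (((Real.cosh (Real.pi * ξ) ^ 2)⁻¹ : ℝ) : ℂ)) l (nhds 1) := by
      have hcast : Tendsto (fun ξ : ℝ => (((Real.cosh (Real.pi * ξ) ^ 2)⁻¹ : ℝ) : ℂ)) l
          (nhds 0) := by
        have := (Complex.continuous_ofReal.tendsto 0).comp hl
        simpa only [Function.comp_def, Complex.ofReal_zero] using this
      have := (tendsto_const_nhds (x := (1 : ℂ)) (f := l)).sub
        ((tendsto_const_nhds (x := Complex.sin ((Real.pi : ℂ) * β) ^ 2) (f := l)).mul hcast)
      simpa only [mul_zero, sub_zero] using this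
    have hlim2 := h0.inv₀ one_ne_zero
    rw [inv_one] at hlim2
    refine Tendsto.congr (fun ξ => ?_) hlim2
    rw [hrw ξ, one_div]
  -- build φ = log ∘ f
  refine ⟨?_, hf0, fun ξ => Complex.log (f ξ), ?_, ?_, ?_, ?_⟩
  · intro ξ
    simp only [khat, f]
    rw [eq_div_iff (hden ξ), sub_mul, div_mul_cancel₀ _ (hden ξ), one_mul]
    ring
  · exact hcont.clog hslit
  · intro ξ
    exact Complex.exp_log (hf0 ξ)
  · have := (hflim atTop hinvlim_top).clog (by simp [Complex.mem_slitPlane_iff])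
    simpa using this
  · have := (hflim atBot hinvlim_bot).clog (by simp [Complex.mem_slitPlane_iff])
    simpa using this
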